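/- For every positive integer n, the dihedral group D_{2n} of order 2n satisfies 2√n ≤ Δ[D_{2n}] ≤ 2·Δ[C_n], and consequently √2 ≤ ð[D_{2n}] ≤ √2·ð[C_n]. -/

import Mathlib

/-- A finset `B` is a difference basis of the group `G` if every element of `G`
can be written as `a * b⁻¹` with `a b ∈ B`. -/
def IsDiffBasis {G : Type*} [Group G] (B : Finset G) : Prop :=
  ∀ g : G, ∃ a ∈ B, ∃ b ∈ B, g = a * b⁻¹

/-- The difference size `Δ[G]` of a group `G`: the smallest cardinality of a difference basis. -/
noncomputable def diffSize (G : Type*) [Group G] : ℕ :=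
  sInf {k | ∃ B : Finset G, B.card = k ∧ IsDiffBasis B}

/-- The difference characteristic `ð[G] = Δ[G]/√|G|`. -/
noncomputable def diffChar (G : Type*) [Group G] : ℝ :=
  (diffSize G : ℝ) / Real.sqrt (Nat.card G)

lemma univ_isDiffBasis (G : Type*) [Group G] [Fintype G] :
    IsDiffBasis (Finset.univ : Finset G) :=
  fun g => ⟨g, Finset.mem_univ _, 1, Finset.mem_univ _, by simp⟩

lemma diffSize_mem (G : Type*) [Group G] [Fintype G] :
    ∃ B : Finset G, B.card = diffSize G ∧ IsDiffBasis B := by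
  have hne : {k | ∃ B : Finset G, B.card = k ∧ IsDiffBasis B}.Nonempty :=
    ⟨(Finset.univ : Finset G).card, Finset.univ, rfl, univ_isDiffBasis G⟩
  exact Nat.sInf_mem hne

lemma diffSize_le (G : Type*) [Group G] (B : Finset G) (hB : IsDiffBasis B) :
    diffSize G ≤ B.card :=
  Nat.sInf_le ⟨B, rfl, hB⟩

open DihedralGroup in
lemma dihedral_lower (n : ℕ) [NeZero n] (B : Finset (DihedralGroup n))
    (hB : IsDiffBasis B) : 2 * Real.sqrt n ≤ (B.card : ℝ) := by
  classical
  set X : Finset (ZMod n) := Finset.univ.filter (fun i => DihedralGroup.r i ∈ B) with hX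
  set Y : Finset (ZMod n) := Finset.univ.filter (fun i => DihedralGroup.sr i ∈ B) with hY
  have hrinj : Function.Injective (DihedralGroup.r (n := n)) := fun a b h => by
    cases h; rfl
  have hsrinj : Function.Injective (DihedralGroup.sr (n := n)) := fun a b h => by
    cases h; rfl
  have hcard : X.card + Y.card ≤ B.card := by
    have hsub : X.image DihedralGroup.r ∪ Y.image DihedralGroup.sr ⊆ B := by
      intro g hg
      rcases Finset.mem_union.mp hg with hg | hg <;>
        · obtain ⟨i, hi, rfl⟩ := Finset.mem_image.mp hg
          simpa using (Finset.mem_filter.mp hi).2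
    have hdisj : Disjoint (X.image DihedralGroup.r) (Y.image DihedralGroup.sr) := by
      rw [Finset.disjoint_left]
      rintro g hg1 hg2
      obtain ⟨i, _, rfl⟩ := Finset.mem_image.mp hg1
      obtain ⟨j, _, hj⟩ := Finset.mem_image.mp hg2
      exact absurd hj (by simp)
    calc X.card + Y.card = (X.image DihedralGroup.r).card + (Y.image DihedralGroup.sr).card := by
          rw [Finset.card_image_of_injective _ hrinj, Finset.card_image_of_injective _ hsrinj]
      _ = (X.image DihedralGroup.r ∪ Y.image DihedralGroup.sr).card :=
          (Finset.card_union_of_disjoint hdisj).symm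
      _ ≤ B.card := Finset.card_le_card hsub
  have hXY : n ≤ X.card * Y.card := by
    have hsub : (Finset.univ : Finset (ZMod n)) ⊆
        (Y ×ˢ X).image (fun p => p.1 - p.2) := by
      intro k _
      obtain ⟨a, ha, b, hb, hk⟩ := hB (DihedralGroup.sr k)
      rcases a with i | i <;> rcases b with j | j
      · exact absurd hk (by simp [show (DihedralGroup.r j)⁻¹ = DihedralGroup.r (-j) from rfl])
      · -- a = r i, b = sr j : sr k = r i * sr j = sr (j - i)
        rw [show (DihedralGroup.sr j)⁻¹ = DihedralGroup.sr j from rfl, r_mul_sr] at hk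
        rw [sr.injEq] at hk
        refine Finset.mem_image.mpr ⟨(j, i), Finset.mem_product.mpr ⟨?_, ?_⟩, hk.symm⟩
        · exact Finset.mem_filter.mpr ⟨Finset.mem_univ _, hb⟩
        · exact Finset.mem_filter.mpr ⟨Finset.mem_univ _, ha⟩
      · -- a = sr i, b = r j : sr k = sr i * r (-j) = sr (i - j)
        rw [show (DihedralGroup.r j)⁻¹ = DihedralGroup.r (-j) from rfl, sr_mul_r] at hk
        rw [sr.injEq] at hk
        refine Finset.mem_image.mpr ⟨(i, j), Finset.mem_product.mpr ⟨?_, ?_⟩, ?_⟩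
        · exact Finset.mem_filter.mpr ⟨Finset.mem_univ _, ha⟩
        · exact Finset.mem_filter.mpr ⟨Finset.mem_univ _, hb⟩
        · rw [hk]; ring
      · exact absurd hk (by simp [show (DihedralGroup.sr j)⁻¹ = DihedralGroup.sr j from rfl])
    calc n = (Finset.univ : Finset (ZMod n)).card := by simp [ZMod.card]
      _ ≤ ((Y ×ˢ X).image (fun p => p.1 - p.2)).card := Finset.card_le_card hsub
      _ ≤ (Y ×ˢ X).card := Finset.card_image_le
      _ = Y.card * X.card := Finset.card_product _ _
      _ = X.card * Y.card := Nat.mul_comm _ _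
  -- AM-GM
  have hx : (0 : ℝ) ≤ X.card := Nat.cast_nonneg _
  have hy : (0 : ℝ) ≤ Y.card := Nat.cast_nonneg _
  have h1 : Real.sqrt n ≤ Real.sqrt (X.card * Y.card) := Real.sqrt_le_sqrt (by exact_mod_cast hXY)
  have h2 : 2 * Real.sqrt ((X.card : ℝ) * Y.card) ≤ (X.card : ℝ) + Y.card := by
    rw [Real.sqrt_mul hx]
    nlinarith [sq_nonneg (Real.sqrt X.card - Real.sqrt Y.card), Real.sq_sqrt hx,
      Real.sq_sqrt hy, Real.sqrt_nonneg (X.card : ℝ), Real.sqrt_nonneg (Y.card : ℝ)]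
  have hc : ((X.card : ℝ)) + Y.card ≤ B.card := by exact_mod_cast hcard
  calc 2 * Real.sqrt n ≤ 2 * Real.sqrt ((X.card : ℝ) * Y.card) := by linarith
    _ ≤ (X.card : ℝ) + Y.card := h2
    _ ≤ B.card := hc

open DihedralGroup in
lemma dihedral_upper (n : ℕ) [NeZero n] :
    diffSize (DihedralGroup n) ≤ 2 * diffSize (Multiplicative (ZMod n)) := by
  classical
  obtain ⟨A, hAcard, hA⟩ := diffSize_mem (Multiplicative (ZMod n))
  set B : Finset (DihedralGroup n) :=
    A.image (fun a => DihedralGroup.r (Multiplicative.toAdd a)) ∪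
    A.image (fun a => DihedralGroup.sr (Multiplicative.toAdd a)) with hBdef
  have hBbasis : IsDiffBasis B := by
    intro g
    rcases g with k | k
    · obtain ⟨a, ha, b, hb, h⟩ := hA (Multiplicative.ofAdd k)
      have h' : k = Multiplicative.toAdd a - Multiplicative.toAdd b := by
        have := congrArg Multiplicative.toAdd h
        simpa [sub_eq_add_neg] using this
      refine ⟨DihedralGroup.r (Multiplicative.toAdd a), ?_,
        DihedralGroup.r (Multiplicative.toAdd b), ?_, ?_⟩
      · exact Finset.mem_union_left _ (Finset.mem_image_of_mem _ ha)
      · exact Finset.mem_union_left _ (Finset.mem_image_of_mem _ hb)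
      · rw [show (DihedralGroup.r (Multiplicative.toAdd b))⁻¹ =
            DihedralGroup.r (-(Multiplicative.toAdd b)) from rfl, r_mul_r, h']
        congr 1; ring
    · obtain ⟨a, ha, b, hb, h⟩ := hA (Multiplicative.ofAdd k)
      have h' : k = Multiplicative.toAdd a - Multiplicative.toAdd b := by
        have := congrArg Multiplicative.toAdd h
        simpa [sub_eq_add_neg] using this
      refine ⟨DihedralGroup.sr (Multiplicative.toAdd a), ?_,
        DihedralGroup.r (Multiplicative.toAdd b), ?_, ?_⟩
      · exact Finset.mem_union_right _ (Finset.mem_image_of_mem _ ha)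
      · exact Finset.mem_union_left _ (Finset.mem_image_of_mem _ hb)
      · rw [show (DihedralGroup.r (Multiplicative.toAdd b))⁻¹ =
            DihedralGroup.r (-(Multiplicative.toAdd b)) from rfl, sr_mul_r, h']
        congr 1; ring
  have hBcard : B.card ≤ 2 * A.card := by
    calc B.card ≤ (A.image (fun a => DihedralGroup.r (Multiplicative.toAdd a))).card +
          (A.image (fun a => DihedralGroup.sr (Multiplicative.toAdd a))).card :=
        Finset.card_union_le _ _
      _ ≤ A.card + A.card := Nat.add_le_add Finset.card_image_le Finset.card_image_le
      _ = 2 * A.card := (Nat.two_mul _).symm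
  calc diffSize (DihedralGroup n) ≤ B.card := diffSize_le _ B hBbasis
    _ ≤ 2 * A.card := hBcard
    _ = 2 * diffSize (Multiplicative (ZMod n)) := by rw [hAcard]

theorem stmt5 (n : ℕ) (hn : 0 < n) :
    2 * Real.sqrt n ≤ (diffSize (DihedralGroup n) : ℝ) ∧
    diffSize (DihedralGroup n) ≤ 2 * diffSize (Multiplicative (ZMod n)) ∧
    Real.sqrt 2 ≤ diffChar (DihedralGroup n) ∧
    diffChar (DihedralGroup n) ≤ Real.sqrt 2 * diffChar (Multiplicative (ZMod n)) := by
  haveI : NeZero n := ⟨hn.ne'⟩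
  obtain ⟨B, hBcard, hB⟩ := diffSize_mem (DihedralGroup n)
  have h1 : 2 * Real.sqrt n ≤ (diffSize (DihedralGroup n) : ℝ) := by
    rw [← hBcard]; exact_mod_cast dihedral_lower n B hB
  have h2 := dihedral_upper n
  have hcardD : (Nat.card (DihedralGroup n) : ℝ) = 2 * n := by
    rw [Nat.card_eq_fintype_card, DihedralGroup.card]; push_cast; ring
  have hcardC : (Nat.card (Multiplicative (ZMod n)) : ℝ) = n := by
    rw [Nat.card_congr Multiplicative.toAdd, Nat.card_zmod]
  have hs2 : (0:ℝ) < Real.sqrt 2 := Real.sqrt_pos.mpr (by norm_num)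
  have hsn : (0:ℝ) < Real.sqrt n := Real.sqrt_pos.mpr (by exact_mod_cast hn)
  have hsplit : Real.sqrt ((2:ℝ) * n) = Real.sqrt 2 * Real.sqrt n :=
    Real.sqrt_mul (by norm_num) _
  have hs2sq : Real.sqrt 2 * Real.sqrt 2 = 2 := Real.mul_self_sqrt (by norm_num)
  refine ⟨h1, h2, ?_, ?_⟩
  · rw [diffChar, hcardD, hsplit, le_div_iff₀ (by positivity)]
    nlinarith
  · rw [diffChar, diffChar, hcardD, hcardC, hsplit]
    rw [div_le_iff₀ (by positivity)]
    have h2' : (diffSize (DihedralGroup n) : ℝ) ≤ 2 * diffSize (Multiplicative (ZMod n)) := by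
      exact_mod_cast h2
    have hC : (0:ℝ) ≤ (diffSize (Multiplicative (ZMod n)) : ℝ) := Nat.cast_nonneg _
    have key : Real.sqrt 2 * ((diffSize (Multiplicative (ZMod n)) : ℝ) / Real.sqrt n) *
        (Real.sqrt 2 * Real.sqrt n) =
        2 * (diffSize (Multiplicative (ZMod n)) : ℝ) := by
      field_simp
      linear_combination (diffSize (Multiplicative (ZMod n)) : ℝ) * hs2sq
    rw [key]
    linarith
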